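/- Let V be a completely distributive quantale and (A, δ) a V-valued preclosure space. Define α : UA × A → V by α(𝔵,x) = inf_{S ∈ 𝔵} δ(S,x). Then (A, α) is a unitary (U,V)-graph. If moreover (A, δ) is a V-valued pretopological space, then sup{ α(𝔶,x) | 𝔶 ∈ UA with S ∈ 𝔶 } = δ(S,x) for every S ⊆ A and x ∈ A. -/

import Mathlib

/-- The convergence relation `α = ε_A ⊸ δ` induced by a `V`-valued closure
relation `δ`: `α(𝔵,x) = inf_{S ∈ 𝔵} δ(S,x)`. -/
def epsLhom {V : Type*} [CompleteLattice V] {A : Type*}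
    (δ : Set A → A → V) (𝔵 : Ultrafilter A) (x : A) : V :=
  ⨅ S : Set A, ⨅ _ : S ∈ 𝔵, δ S x

/-- Part of **Theorem 3.11** of the paper: for a `V`-valued preclosure space
`(A,δ)` over a completely distributive quantale `V`, the relation
`α(𝔵,x) = inf_{S ∈ 𝔵} δ(S,x)` makes `A` a unitary `(U,V)`-graph; if moreover
`(A,δ)` is a `V`-valued pretopological space then
`sup { α(𝔶,x) | S ∈ 𝔶 } = δ(S,x)` for all `S ⊆ A`, `x ∈ A`. -/
theorem preclosure_to_unitary_graph {V : Type*} [CompletelyDistribLattice V] [Monoid V]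
    (hl : ∀ (v : V) (S : Set V), v * sSup S = ⨆ w ∈ S, v * w)
    (hr : ∀ (v : V) (S : Set V), sSup S * v = ⨆ w ∈ S, w * v)
    {A : Type*} (δ : Set A → A → V)
    (hrefl : ∀ x : A, (1 : V) ≤ δ {x} x)
    (hmono : ∀ (S T : Set A) (x : A), S ⊆ T → δ S x ≤ δ T x) :
    ((∀ x : A, (1 : V) ≤ epsLhom δ (pure x) x) ∧
      (∀ (𝔛 : Ultrafilter (Ultrafilter A)) (x : A),
        (⨅ σ : Set (Ultrafilter A), ⨅ _ : σ ∈ 𝔛, ⨆ 𝔵 ∈ σ, epsLhom δ 𝔵 x) ≤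
          epsLhom δ (𝔛.bind id) x)) ∧
    ((∀ x : A, δ ∅ x = ⊥) →
      (∀ (S T : Set A) (x : A), δ (S ∪ T) x = δ S x ⊔ δ T x) →
      ∀ (S : Set A) (x : A),
        (⨆ 𝔶 : Ultrafilter A, ⨆ _ : S ∈ 𝔶, epsLhom δ 𝔶 x) = δ S x) := by
  refine ⟨⟨?_, ?_⟩, ?_⟩
  · intro x
    refine le_iInf fun S => le_iInf fun hS => ?_
    exact le_trans (hrefl x) (hmono _ _ _ (by simpa using (Ultrafilter.mem_pure.mp hS)))
  · intro 𝔛 x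
    refine le_iInf fun S => le_iInf fun hS => ?_
    have hσ : {𝔵 : Ultrafilter A | S ∈ 𝔵} ∈ 𝔛 := Filter.mem_bind'.mp hS
    calc (⨅ σ : Set (Ultrafilter A), ⨅ _ : σ ∈ 𝔛, ⨆ 𝔵 ∈ σ, epsLhom δ 𝔵 x)
        ≤ ⨆ 𝔵 ∈ {𝔵 : Ultrafilter A | S ∈ 𝔵}, epsLhom δ 𝔵 x := iInf₂_le _ hσ
      _ ≤ δ S x := by
          refine iSup₂_le fun 𝔵 h𝔵 => ?_
          exact iInf₂_le S h𝔵
  · intro hempty hunion S x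
    refine le_antisymm (iSup₂_le fun 𝔶 h𝔶 => iInf₂_le S h𝔶) ?_
    -- hard direction
    set b := δ S x with hb
    -- complete distributivity: b is a sup of "totally below" elements
    have key : b ≤ ⨆ g : (σ : {T : Set V // b ≤ sSup T}) → σ.1,
        ⨅ σ : {T : Set V // b ≤ sSup T}, (g σ : V) := by
      have h1 : b ≤ ⨅ σ : {T : Set V // b ≤ sSup T}, ⨆ c : σ.1, (c : V) := by
        refine le_iInf fun σ => ?_
        simpa [sSup_eq_iSup'] using σ.2
      calc b ≤ _ := h1
        _ = _ := iInf_iSup_eq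
    refine key.trans (iSup_le fun g => ?_)
    set u : V := ⨅ σ : {T : Set V // b ≤ sSup T}, (g σ : V) with hu
    have hu_prop : ∀ T : Set V, b ≤ sSup T → ∃ c ∈ T, u ≤ c := by
      intro T hT
      exact ⟨g ⟨T, hT⟩, (g ⟨T, hT⟩).2, iInf_le (fun σ : {T : Set V // b ≤ sSup T} => (g σ : V)) ⟨T, hT⟩⟩
    -- the "bad" sets
    set J : Set (Set A) := {T | ¬ u ≤ δ T x} with hJ
    -- finite unions of δ
    have hfin : ∀ F : Set (Set A), F.Finite → δ (⋃₀ F) x = ⨆ T ∈ F, δ T x := by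
      intro F hF
      refine Set.Finite.induction_on F hF (by simp [hempty]) ?_
      intro T F hT hFfin ih
      rw [Set.sUnion_insert, hunion, ih]
      exact (iSup_insert (s := F) (b := T) (f := fun U => δ U x)).symm
    -- FIP for {S} ∪ complements of bad sets
    have hFIP : ∀ t : Set (Set A), t ⊆ insert S (compl '' J) → t.Finite →
        (⋂₀ t).Nonempty := by
      intro t ht htfin
      by_contra hne
      rw [Set.not_nonempty_iff_eq_empty] at hne
      set F : Set (Set A) := {T ∈ J | Tᶜ ∈ t} with hF
      have hFfin : F.Finite := by
        have : F ⊆ compl '' t := fun T hT => ⟨Tᶜ, hT.2, compl_compl T⟩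
        exact (htfin.image compl).subset this
      have hsub : S ⊆ ⋃₀ F := by
        intro a ha
        by_contra hna
        have hmem : a ∈ ⋂₀ t := by
          intro T hTt
          rcases ht hTt with rfl | ⟨T', hT', rfl⟩
          · exact ha
          · by_cases hT'J : T' ∈ J
            · intro haT'
              exact hna ⟨T', ⟨hT'J, hTt⟩, haT'⟩
            · exact absurd hT' hT'J
        simp [hne] at hmem
      have hble : b ≤ sSup ((fun T => δ T x) '' F) := by
        calc b ≤ δ (⋃₀ F) x := hmono _ _ _ hsub
          _ = ⨆ T ∈ F, δ T x := hfin F hFfin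
          _ = sSup ((fun T => δ T x) '' F) := by rw [sSup_image]
      rcases hu_prop _ hble with ⟨c, ⟨T, hTF, rfl⟩, huc⟩
      exact hTF.1 huc
    have : (Filter.generate (insert S (compl '' J))).NeBot :=
      Filter.generate_neBot_iff.mpr hFIP
    obtain ⟨𝔶, h𝔶⟩ := Ultrafilter.exists_le (Filter.generate (insert S (compl '' J)))
    have hgen : ∀ T ∈ insert S (compl '' J), T ∈ 𝔶 := fun T hT =>
      h𝔶 (Filter.mem_generate_of_mem hT)
    have hS𝔶 : S ∈ 𝔶 := hgen S (Set.mem_insert _ _)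
    have hul : u ≤ epsLhom δ 𝔶 x := by
      refine le_iInf fun T => le_iInf fun hT => ?_
      by_contra hnu
      have : Tᶜ ∈ 𝔶 := hgen Tᶜ (Set.mem_insert_of_mem _ ⟨T, hnu, rfl⟩)
      exact (Ultrafilter.compl_mem_iff_notMem.mp this) hT
    calc u ≤ epsLhom δ 𝔶 x := hul
      _ ≤ ⨆ 𝔶 : Ultrafilter A, ⨆ _ : S ∈ 𝔶, epsLhom δ 𝔶 x := le_iSup₂ (f := fun (𝔶 : Ultrafilter A) (_ : S ∈ 𝔶) => epsLhom δ 𝔶 x) 𝔶 hS𝔶
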